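/- For p > 0 define c₀(p) = p·(1 + √(2 + p/2))/(4 + 2p), and for c > 0 define g(p,c) = 4c - p + (4c + p)(c - 1)·p/((4 + p)·c). Then: (i) if 1 ≤ p < 4, then g(p,c) > 0 for all c > 1; (ii) if p > 4, then c₀(p) > 1, and g(p,c) < 0 for 1 < c < c₀(p), g(p,c₀(p)) = 0, and g(p,c) > 0 for c > c₀(p). -/

import Mathlib

/-- The quantity `g(p,c)` whose sign determines `∂P/∂c` in the solitary wave
limit for the gBBM equation with power nonlinearity. -/
noncomputable def gBBMg (p c : ℝ) : ℝ :=
  4 * c - p + (4 * c + p) * (c - 1) * p / ((4 + p) * c)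

/-- The critical wave speed `c₀(p) = p (1 + √(2 + p/2)) / (4 + 2p)`. -/
noncomputable def gBBMc₀ (p : ℝ) : ℝ :=
  p * (1 + Real.sqrt (2 + p / 2)) / (4 + 2 * p)

lemma gBBMg_eq (p c : ℝ) (hp : 0 < p) (hc : 0 < c) :
    gBBMg p c = ((16 + 8*p)*c^2 - 8*p*c - p^2) / ((4 + p) * c) := by
  have h1 : (4 + p) ≠ 0 := by linarith
  have h2 : c ≠ 0 := ne_of_gt hc
  unfold gBBMg
  field_simp
  ring

/-- Sign analysis of `g(p,c)`: for `1 ≤ p < 4` it is positive for all `c > 1`;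
for `p > 4`, `c₀(p) > 1` and `g(p,·)` is negative on `(1, c₀(p))`, vanishes at
`c₀(p)`, and is positive on `(c₀(p), ∞)`. -/
theorem stmt_18 (p : ℝ) (hp : 0 < p) :
    ((1 ≤ p ∧ p < 4) → ∀ c : ℝ, 1 < c → 0 < gBBMg p c) ∧
    (4 < p →
      1 < gBBMc₀ p ∧
      (∀ c : ℝ, 1 < c → c < gBBMc₀ p → gBBMg p c < 0) ∧
      gBBMg p (gBBMc₀ p) = 0 ∧
      (∀ c : ℝ, gBBMc₀ p < c → 0 < gBBMg p c)) := by
  set s := Real.sqrt (2 + p / 2) with hs_def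
  have hs0 : 0 ≤ s := Real.sqrt_nonneg _
  have hs2 : s ^ 2 = 2 + p / 2 := Real.sq_sqrt (by linarith)
  have hs1 : 1 < s := by
    nlinarith [hs2, hs0]
  constructor
  · rintro ⟨hp1, hp4⟩ c hc
    have hc0 : 0 < c := by linarith
    rw [gBBMg_eq p c hp hc0]
    apply div_pos
    · nlinarith [sq_nonneg (c - 1), sq_nonneg c]
    · positivity
  · intro hp4
    have hc₀ : gBBMc₀ p = p * (1 + s) / (4 + 2 * p) := rfl
    have hden : (0:ℝ) < 4 + 2 * p := by linarith
    have hc₀1 : 1 < gBBMc₀ p := by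
      rw [hc₀, lt_div_iff₀ hden]
      have key : (4 + p)^2 < p^2 * s^2 := by
        nlinarith [hs2, mul_pos (mul_pos (show (0:ℝ) < p - 4 by linarith)
          (show (0:ℝ) < p + 4 by linarith)) (show (0:ℝ) < p + 2 by linarith)]
      have key2 : (4 + p)^2 < (p * s)^2 := by nlinarith [key]
      have hps : 4 + p < p * s := by
        nlinarith [key2, mul_nonneg hp.le hs0]
      nlinarith
    have hQc₀ : (16 + 8*p) * (gBBMc₀ p)^2 - 8*p*(gBBMc₀ p) - p^2 = 0 := by
      rw [hc₀]
      have hd : (4 + 2 * p) ≠ 0 := ne_of_gt hden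
      field_simp
      ring_nf
      linear_combination (8*p^2*(2+p)) * hs2
    have hc₀0 : 0 < gBBMc₀ p := by linarith
    refine ⟨hc₀1, ?_, ?_, ?_⟩
    · intro c hc1 hcc
      have hc0 : 0 < c := by linarith
      rw [gBBMg_eq p c hp hc0]
      apply div_neg_of_neg_of_pos
      · have hb : (0:ℝ) < (16+8*p)*(c+gBBMc₀ p) - 8*p := by nlinarith
        nlinarith [hQc₀, mul_pos (sub_pos.mpr hcc) hb]
      · positivity
    · rw [gBBMg_eq p _ hp hc₀0, hQc₀, zero_div]
    · intro c hcc
      have hc0 : 0 < c := lt_trans hc₀0 hcc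
      rw [gBBMg_eq p c hp hc0]
      apply div_pos
      · have hb : (0:ℝ) < (16+8*p)*(c+gBBMc₀ p) - 8*p := by nlinarith
        nlinarith [hQc₀, mul_pos (sub_pos.mpr hcc) hb]
      · positivity
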